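/- arXiv:1702.03157 — 6 statements merged into one kernel-verified Lean document; each statement's English description precedes it below -/
import Mathlib

section
/- If σ is a field automorphism of ℂ such that for every sequence of complex numbers (aₙ) converging to 0 the sequence (σ(aₙ)) is bounded, then σ is the identity or complex conjugation. -/
theorem stmt_1 (σ : ℂ →+* ℂ) (hbij : Function.Bijective σ)
    (hb : ∀ a : ℕ → ℂ, Filter.Tendsto a Filter.atTop (nhds 0) →
      ∃ C : ℝ, ∀ n, ‖σ (a n)‖ ≤ C) :
    σ = RingHom.id ℂ ∨ σ = (starRingEnd ℂ) := by
  have key : ∀ ε > 0, ∃ δ > 0, ∀ z : ℂ, ‖z‖ < δ → ‖σ z‖ < ε := by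
    by_contra h
    push_neg at h
    obtain ⟨ε, hε, h⟩ := h
    choose z hz hz2 using fun n : ℕ => h (1 / ((n + 1 : ℝ) ^ 2)) (by positivity)
    set a : ℕ → ℂ := fun n => (n + 1 : ℕ) * z n with ha
    have hlim : Filter.Tendsto a Filter.atTop (nhds 0) := by
      rw [tendsto_zero_iff_norm_tendsto_zero]
      apply squeeze_zero (fun n => norm_nonneg _) (g := fun n : ℕ => 1 / (n + 1 : ℝ))
      · intro n
        have : ‖a n‖ = (n + 1 : ℝ) * ‖z n‖ := by
          rw [ha]
          rw [norm_mul, Complex.norm_natCast]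
          push_cast
          ring
        rw [this]
        have h1 : (n + 1 : ℝ) * ‖z n‖ ≤ (n + 1 : ℝ) * (1 / ((n + 1 : ℝ) ^ 2)) := by
          apply mul_le_mul_of_nonneg_left (le_of_lt (hz n)) (by positivity)
        calc (n + 1 : ℝ) * ‖z n‖ ≤ (n + 1 : ℝ) * (1 / ((n + 1 : ℝ) ^ 2)) := h1
          _ = 1 / (n + 1 : ℝ) := by field_simp
      · exact tendsto_one_div_add_atTop_nhds_zero_nat
    obtain ⟨C, hC⟩ := hb a hlim
    obtain ⟨n, hn⟩ := exists_nat_gt (C / ε)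
    have hσa : ‖σ (a n)‖ = (n + 1 : ℝ) * ‖σ (z n)‖ := by
      have : σ (a n) = (n + 1 : ℕ) * σ (z n) := by
        rw [ha]; simp [map_mul]
      rw [this, norm_mul, Complex.norm_natCast]
      push_cast
      ring
    have h1 : (n + 1 : ℝ) * ε ≤ ‖σ (a n)‖ := by
      rw [hσa]
      exact mul_le_mul_of_nonneg_left (hz2 n) (by positivity)
    have h2 : C < (n + 1 : ℝ) * ε := by
      have : C < n * ε := (div_lt_iff₀ hε).mp hn
      nlinarith
    linarith [hC n]
  have hcont : Continuous σ := by
    rw [Metric.continuous_iff]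
    intro b ε hε
    obtain ⟨δ, hδ, hδ'⟩ := key ε hε
    refine ⟨δ, hδ, fun a hab => ?_⟩
    rw [Complex.dist_eq] at hab ⊢
    rw [← map_sub]
    exact hδ' _ hab
  exact Complex.ringHom_eq_id_or_conj_of_continuous hcont
end

section
/- If a closed subspace X of a complex Hilbert space H is compatible with every closed subspace of H, then X = 0 or X = H. -/
theorem stmt_6 {H : Type*} [NormedAddCommGroup H] [InnerProductSpace ℂ H] [CompleteSpace H]
    (X : Submodule ℂ H) (hX : IsClosed (X : Set H))
    (h : ∀ Y : Submodule ℂ H, IsClosed (Y : Set H) →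
      Submodule.IsOrtho ((X ⊓ Y)ᗮ ⊓ X) ((X ⊓ Y)ᗮ ⊓ Y)) :
    X = ⊥ ∨ X = ⊤ := by
  by_contra hc
  push_neg at hc
  obtain ⟨hb, ht⟩ := hc
  obtain ⟨x, hxX, hx0⟩ := (Submodule.ne_bot_iff X).mp hb
  haveI : CompleteSpace X := hX.completeSpace_coe
  have hOrtho : Xᗮ ≠ ⊥ := fun h0 => ht (Submodule.orthogonal_eq_bot_iff.mp h0)
  obtain ⟨w, hwX, hw0⟩ := (Submodule.ne_bot_iff Xᗮ).mp hOrtho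
  set Y : Submodule ℂ H := Submodule.span ℂ {x + w} with hY
  have hYclosed : IsClosed (Y : Set H) := Submodule.closed_of_finiteDimensional Y
  have hXY : X ⊓ Y = ⊥ := by
    rw [Submodule.eq_bot_iff]
    rintro v ⟨hvX, hvY⟩
    obtain ⟨c, rfl⟩ := Submodule.mem_span_singleton.mp hvY
    rcases eq_or_ne c 0 with rfl | hc0
    · simp
    · exfalso
      have hxw : x + w ∈ X := by
        have := X.smul_mem c⁻¹ hvX
        rwa [smul_smul, inv_mul_cancel₀ hc0, one_smul] at this
      have hwmem : w ∈ X := by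
        have := X.sub_mem hxw hxX
        simpa using this
      have h2 : (inner ℂ w w : ℂ) = 0 := (Submodule.mem_orthogonal X w).mp hwX w hwmem
      exact hw0 (inner_self_eq_zero.mp h2)
  have key := h Y hYclosed
  rw [hXY, Submodule.bot_orthogonal_eq_top, top_inf_eq, top_inf_eq] at key
  have hin : (inner ℂ x (x + w) : ℂ) = 0 := Submodule.isOrtho_iff_inner_eq.mp key x hxX (x + w) (Submodule.mem_span_singleton_self _)
  rw [inner_add_right, (Submodule.mem_orthogonal X w).mp hwX x hxX, add_zero,
    inner_self_eq_zero] at hin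
  exact hx0 hin
end

section
/- Let H be a complex Hilbert space of dimension at least 3, and let L be a bounded invertible linear operator on H that maps orthogonal vectors to orthogonal vectors (x ⊥ y implies L(x) ⊥ L(y)). Then L is a nonzero scalar multiple of a unitary operator. -/
open scoped InnerProductSpace
lemma exists_orth {H : Type*} [NormedAddCommGroup H] [InnerProductSpace ℂ H] [CompleteSpace H]
    (hdim : 3 ≤ Module.rank ℂ H) (x y : H) :
    ∃ z : H, ‖z‖ = 1 ∧ (inner ℂ x z : ℂ) = 0 ∧ (inner ℂ y z : ℂ) = 0 := by
  set K := Submodule.span ℂ ({x, y} : Set H) with hK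
  have hfd : FiniteDimensional ℂ K := by
    apply FiniteDimensional.span_of_finite
    exact (Set.finite_singleton y).insert x
  have hne : Kᗮ ≠ ⊥ := by
    intro h
    have hKtop : K = ⊤ := Submodule.orthogonal_eq_bot_iff.mp h
    have h1 : Module.rank ℂ K ≤ 2 := by
      refine le_trans (rank_span_le ({x, y} : Set H)) ?_
      refine le_trans (Cardinal.mk_insert_le) ?_
      simp
      exact le_of_eq one_add_one_eq_two
    rw [hKtop] at h1
    have := (rank_top ℂ H) ▸ h1
    exact absurd (hdim.trans this) (by norm_num)
  obtain ⟨z, hzK, hz0⟩ := Submodule.exists_mem_ne_zero_of_ne_bot hne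
  have hx : (inner ℂ x z : ℂ) = 0 := by
    have := hzK x (Submodule.subset_span (by simp))
    exact this
  have hy : (inner ℂ y z : ℂ) = 0 := by
    have := hzK y (Submodule.subset_span (by simp))
    exact this
  refine ⟨‖z‖⁻¹ • z, ?_, ?_, ?_⟩
  · simp [norm_smul, norm_ne_zero_iff.mpr hz0]
  · rw [inner_smul_right_eq_smul, hx, smul_zero]
  · rw [inner_smul_right_eq_smul, hy, smul_zero]

theorem stmt_12 {H : Type*} [NormedAddCommGroup H] [InnerProductSpace ℂ H] [CompleteSpace H]
    (hdim : 3 ≤ Module.rank ℂ H) (L : H ≃L[ℂ] H)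
    (horth : ∀ x y : H, (inner ℂ x y : ℂ) = 0 → (inner ℂ (L x) (L y) : ℂ) = 0) :
    ∃ (c : ℂ) (U : H →L[ℂ] H), c ≠ 0 ∧
      (∀ x y : H, (inner ℂ (U x) (U y) : ℂ) = (inner ℂ x y : ℂ)) ∧
      Function.Bijective U ∧ (L : H →L[ℂ] H) = c • U := by
  have keyA : ∀ x y : H, (inner ℂ x y : ℂ) = 0 → ‖x‖ = ‖y‖ → ‖L x‖ = ‖L y‖ := by
    intro x y hxy hnorm
    have hyx : (inner ℂ y x : ℂ) = 0 := inner_eq_zero_symm.mp hxy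
    have h1 : (inner ℂ (x + y) (x - y) : ℂ) = 0 := by
      rw [inner_sub_right, inner_add_left, inner_add_left, hxy, hyx,
        inner_self_eq_norm_sq_to_K, inner_self_eq_norm_sq_to_K, hnorm]
      ring
    have h2 := horth _ _ h1
    rw [map_add, map_sub, inner_sub_right, inner_add_left, inner_add_left,
      horth x y hxy, horth y x hyx,
      inner_self_eq_norm_sq_to_K, inner_self_eq_norm_sq_to_K] at h2
    rw [add_zero, zero_add, sub_eq_zero] at h2
    have h4 : (‖L x‖ : ℝ) ^ 2 = (‖L y‖ : ℝ) ^ 2 := by exact_mod_cast h2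
    nlinarith [norm_nonneg (L x), norm_nonneg (L y)]
  have keyB : ∀ x y : H, ‖x‖ = 1 → ‖y‖ = 1 → ‖L x‖ = ‖L y‖ := by
    intro x y hx hy
    obtain ⟨z, hz1, hxz, hyz⟩ := exists_orth hdim x y
    rw [keyA x z hxz (by rw [hx, hz1]), keyA y z hyz (by rw [hy, hz1])]
  -- get a unit vector
  have hnt : Nontrivial H := by
    rw [← rank_pos_iff_nontrivial (R := ℂ)]
    exact lt_of_lt_of_le (by norm_num) hdim
  obtain ⟨v, hv0⟩ := exists_ne (0 : H)
  set e : H := ((‖v‖⁻¹ : ℝ) : ℂ) • v with he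
  have hve : ‖e‖ = 1 := by
    simp [he, norm_smul, norm_inv, inv_mul_cancel₀ (norm_ne_zero_iff.mpr hv0)]
  set k : ℝ := ‖L e‖ with hk
  have he0 : e ≠ 0 := by
    intro h; rw [h] at hve; simp at hve
  have hkpos : 0 < k := by
    rw [hk, norm_pos_iff]
    exact fun h => he0 (L.injective (by simp [h]))
  have hnorm : ∀ x : H, ‖L x‖ = k * ‖x‖ := by
    intro x
    rcases eq_or_ne x 0 with rfl | hx0
    · simp
    · set u : H := ((‖x‖⁻¹ : ℝ) : ℂ) • x with hu
      have hu1 : ‖u‖ = 1 := by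
        simp [hu, norm_smul, norm_inv, inv_mul_cancel₀ (norm_ne_zero_iff.mpr hx0)]
      have hLu : ‖L u‖ = k := keyB u e hu1 hve
      have hxu : x = ((‖x‖ : ℝ) : ℂ) • u := by
        rw [hu, smul_smul]
        norm_cast
        rw [mul_inv_cancel₀ (norm_ne_zero_iff.mpr hx0)]
        simp
      calc ‖L x‖ = ‖L (((‖x‖ : ℝ) : ℂ) • u)‖ := by rw [← hxu]
        _ = ‖((‖x‖ : ℝ) : ℂ)‖ * ‖L u‖ := by rw [map_smul, norm_smul]
        _ = k * ‖x‖ := by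
            rw [hLu]
            simp [mul_comm, abs_of_nonneg (norm_nonneg x)]
  set U : H →L[ℂ] H := ((k⁻¹ : ℝ) : ℂ) • (L : H →L[ℂ] H) with hUdef
  have hU : ∀ x, ‖U x‖ = ‖x‖ := by
    intro x
    rw [hUdef]
    simp only [ContinuousLinearMap.coe_smul', Pi.smul_apply, ContinuousLinearEquiv.coe_coe]
    rw [norm_smul, hnorm]
    simp [abs_of_pos hkpos, inv_mul_cancel₀ (ne_of_gt hkpos), ← mul_assoc]
  refine ⟨(k : ℂ), U, by exact_mod_cast ne_of_gt hkpos, ?_, ?_, ?_⟩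
  · intro x y
    exact LinearIsometry.inner_map_map ⟨(U : H →ₗ[ℂ] H), hU⟩ x y
  · constructor
    · intro a b hab
      have : ‖a - b‖ = 0 := by rw [← hU (a - b), map_sub, hab, sub_self, norm_zero]
      rwa [norm_eq_zero, sub_eq_zero] at this
    · intro w
      refine ⟨L.symm (((k : ℝ) : ℂ) • w), ?_⟩
      rw [hUdef]
      simp only [ContinuousLinearMap.coe_smul', Pi.smul_apply,
        ContinuousLinearEquiv.coe_coe, ContinuousLinearEquiv.apply_symm_apply, smul_smul]
      norm_cast
      rw [inv_mul_cancel₀ (ne_of_gt hkpos)]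
      simp
  · ext x
    rw [hUdef]
    simp only [ContinuousLinearMap.coe_smul', Pi.smul_apply, smul_smul,
      ContinuousLinearEquiv.coe_coe]
    norm_cast
    rw [mul_inv_cancel₀ (ne_of_gt hkpos)]
    simp
end

section
/- Let H be a complex Hilbert space with dim H ≥ 3 and L an invertible linear map on H sending orthogonal vectors to orthogonal vectors. Then the function x ↦ ‖L(x)‖ is constant on the set of unit vectors of H. -/
open Submodule

lemma key_orth {H : Type*} [NormedAddCommGroup H] [InnerProductSpace ℂ H]
    (L : H →ₗ[ℂ] H)
    (horth : ∀ x y : H, (inner ℂ x y : ℂ) = 0 → (inner ℂ (L x) (L y) : ℂ) = 0)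
    (x y : H) (hx : ‖x‖ = 1) (hy : ‖y‖ = 1) (hxy : (inner ℂ x y : ℂ) = 0) :
    ‖L x‖ = ‖L y‖ := by
  have hyx : (inner ℂ y x : ℂ) = 0 := by
    rw [← inner_conj_symm, hxy]; simp
  have h0 : (inner ℂ (x + y) (x - y) : ℂ) = 0 := by
    simp [inner_add_left, inner_sub_right, hxy, hyx,
      inner_self_eq_norm_sq_to_K, hx, hy]
  have h1 := horth _ _ h0
  rw [map_add, map_sub] at h1
  rw [inner_add_left, inner_sub_right, inner_sub_right,
    horth x y hxy, horth y x hyx] at h1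
  have h2 : (inner ℂ (L x) (L x) : ℂ) = inner ℂ (L y) (L y) := by
    linear_combination h1
  rw [inner_self_eq_norm_sq_to_K, inner_self_eq_norm_sq_to_K] at h2
  have h3 : ‖L x‖ ^ 2 = ‖L y‖ ^ 2 := by exact_mod_cast h2
  nlinarith [norm_nonneg (L x), norm_nonneg (L y)]

theorem stmt_13 {H : Type*} [NormedAddCommGroup H] [InnerProductSpace ℂ H]
    (hdim : 3 ≤ Module.rank ℂ H) (L : H →ₗ[ℂ] H) (hbij : Function.Bijective L)
    (horth : ∀ x y : H, (inner ℂ x y : ℂ) = 0 → (inner ℂ (L x) (L y) : ℂ) = 0) :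
    ∀ x y : H, ‖x‖ = 1 → ‖y‖ = 1 → ‖L x‖ = ‖L y‖ := by
  intro x y hx hy
  set K : Submodule ℂ H := Submodule.span ℂ ({x, y} : Set H) with hK
  have hfd : FiniteDimensional ℂ K := by
    apply FiniteDimensional.span_of_finite
    exact (Set.finite_singleton y).insert x
  have hKne : Kᗮ ≠ ⊥ := by
    intro hbot
    have hKtop : K = ⊤ := (Submodule.orthogonal_eq_bot_iff).mp hbot
    have hle : Module.rank ℂ K ≤ 2 := by
      refine le_trans (rank_span_le _) ?_
      refine le_trans (Cardinal.mk_insert_le) ?_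
      simp [Cardinal.mk_singleton]
      norm_num
    rw [hKtop] at hle
    rw [rank_top] at hle
    have : (3 : Cardinal) ≤ 2 := le_trans hdim hle
    norm_num at this
  obtain ⟨z, hzK, hz0⟩ := Submodule.exists_mem_ne_zero_of_ne_bot hKne
  set w : H := ‖z‖⁻¹ • z with hw
  have hwK : w ∈ Kᗮ := Submodule.smul_mem _ _ hzK
  have hwn : ‖w‖ = 1 := by
    rw [hw, norm_smul]
    simp [norm_ne_zero_iff.mpr hz0]
  have hxw : (inner ℂ x w : ℂ) = 0 :=
    Submodule.inner_right_of_mem_orthogonal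
      (Submodule.subset_span (Set.mem_insert x {y})) hwK
  have hyw : (inner ℂ y w : ℂ) = 0 :=
    Submodule.inner_right_of_mem_orthogonal
      (Submodule.subset_span (by simp)) hwK
  calc ‖L x‖ = ‖L w‖ := key_orth L horth x w hx hwn hxw
    _ = ‖L y‖ := (key_orth L horth y w hy hwn hyw).symm
end

section
/- Let V be a vector space over a field and k a natural number with k < dim V. For any X, Y in the Grassmannian of k-dimensional subspaces of V, the path distance between X and Y in the Grassmann graph (where two k-dimensional subspaces are adjacent if their intersection has dimension k−1) equals k − dim(X ∩ Y). -/
def grassmannGraph (K V : Type*) [Field K] [AddCommGroup V] [Module K V] (k : ℕ) :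
    SimpleGraph {X : Submodule K V // FiniteDimensional K X ∧ Module.finrank K X = k} where
  Adj X Y := X ≠ Y ∧ Module.finrank K ↥(X.1 ⊓ Y.1) = k - 1
  symm := by
    constructor
    rintro X Y ⟨h1, h2⟩
    refine ⟨h1.symm, ?_⟩
    rwa [inf_comm]
  loopless := by
    constructor
    rintro X ⟨h, -⟩
    exact h rfl

section Aux

open Module Submodule

variable {K V : Type*} [Field K] [AddCommGroup V] [Module K V]

lemma grass_aux_sup_span (A : Submodule K V) [FiniteDimensional K A] {x : V} (hx : x ∉ A) :
    Module.finrank K ↥(A ⊔ (K ∙ x)) = Module.finrank K A + 1 := by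
  have hx0 : x ≠ 0 := fun h => hx (h ▸ A.zero_mem)
  have hdisj : A ⊓ (K ∙ x) = ⊥ :=
    ((Submodule.disjoint_span_singleton).mpr (fun h => absurd h hx)).eq_bot
  have h := Submodule.finrank_sup_add_finrank_inf_eq A (K ∙ x)
  rw [finrank_span_singleton hx0, hdisj, finrank_bot] at h
  omega

/-- Intermediate subspace of any dimension between `A` and `B`. -/
lemma grass_aux_between (n : ℕ) : ∀ (A B : Submodule K V) [FiniteDimensional K B], A ≤ B →
    n = Module.finrank K B - Module.finrank K A →
    Module.finrank K A ≤ Module.finrank K B →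
    ∀ m : ℕ, Module.finrank K A ≤ m → m ≤ Module.finrank K B →
    ∃ W : Submodule K V, A ≤ W ∧ W ≤ B ∧ Module.finrank K W = m := by
  induction n with
  | zero =>
    intro A B _ hAB hn hle m h1 h2
    haveI := Submodule.finiteDimensional_of_le (K := K) hAB
    have : Module.finrank K A = Module.finrank K B := by omega
    exact ⟨A, le_rfl, hAB, by omega⟩
  | succ n ih =>
    intro A B _ hAB hn hle m h1 h2
    haveI := Submodule.finiteDimensional_of_le (K := K) hAB
    rcases Nat.eq_or_lt_of_le h1 with h | h
    · exact ⟨A, le_rfl, hAB, h⟩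
    · have hlt : A < B := by
        rcases lt_or_eq_of_le hAB with h' | h'
        · exact h'
        · subst h'; omega
      obtain ⟨x, hxB, hxA⟩ := SetLike.exists_of_lt hlt
      set A' := A ⊔ (K ∙ x) with hA'
      have hfr : Module.finrank K A' = Module.finrank K A + 1 := grass_aux_sup_span A hxA
      have hA'B : A' ≤ B := sup_le hAB ((Submodule.span_singleton_le_iff_mem x B).mpr hxB)
      obtain ⟨W, hW1, hW2, hW3⟩ := ih A' B hA'B (by omega) (by omega) m (by omega) h2
      exact ⟨W, le_trans le_sup_left hW1, hW2, hW3⟩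

/-- Key inequality: along an edge of the Grassmann graph, the dimension of the
intersection with a fixed subspace drops by at most one. -/
lemma grass_aux_key {k : ℕ} (X Z Y : Submodule K V) [FiniteDimensional K X]
    [FiniteDimensional K Z] [FiniteDimensional K Y]
    (hX : Module.finrank K X = k) (hZ : Module.finrank K Z = k)
    (hXZ : Module.finrank K ↥(X ⊓ Z) = k - 1) (hk : 1 ≤ k) :
    Module.finrank K ↥(Z ⊓ Y) ≤ Module.finrank K ↥(X ⊓ Y) + 1 := by
  haveI : FiniteDimensional K ↥(Z ⊓ Y) := Submodule.finiteDimensional_of_le inf_le_left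
  haveI : FiniteDimensional K ↥(X ⊓ Z) := Submodule.finiteDimensional_of_le inf_le_left
  haveI : FiniteDimensional K ↥(X ⊓ Y) := Submodule.finiteDimensional_of_le inf_le_left
  set A := Z ⊓ Y with hA
  have h := Submodule.finrank_sup_add_finrank_inf_eq A (X ⊓ Z)
  have hsup : A ⊔ (X ⊓ Z) ≤ Z := sup_le inf_le_left inf_le_right
  have hsupfr : Module.finrank K ↥(A ⊔ (X ⊓ Z)) ≤ k := hZ ▸ Submodule.finrank_mono hsup
  have hinf : A ⊓ (X ⊓ Z) ≤ X ⊓ Y :=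
    le_inf (le_trans inf_le_right inf_le_left) (le_trans inf_le_left inf_le_right)
  have hinfr : Module.finrank K ↥(A ⊓ (X ⊓ Z)) ≤ Module.finrank K ↥(X ⊓ Y) :=
    Submodule.finrank_mono hinf
  omega

end Aux

section Main

open Module Submodule SimpleGraph

variable {K V : Type*} [Field K] [AddCommGroup V] [Module K V] {k : ℕ}

local notation "Grass" => {X : Submodule K V // FiniteDimensional K X ∧ Module.finrank K X = k}

lemma grass_lower (X Y : Grass) (p : (grassmannGraph K V k).Walk X Y) :
    k - Module.finrank K ↥(X.1 ⊓ Y.1) ≤ p.length := by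
  induction p with
  | nil =>
    rename_i X
    haveI := X.2.1
    rw [inf_idem, X.2.2]
    omega
  | @cons X Z Y h' p ih =>
    haveI := X.2.1; haveI := Z.2.1; haveI := Y.2.1
    have hk1 : 1 ≤ k := by
      by_contra hk0
      have hk0 : k = 0 := by omega
      apply h'.1
      have hX : X.1 = ⊥ := Submodule.finrank_eq_zero.mp (by rw [X.2.2, hk0])
      have hZ : Z.1 = ⊥ := Submodule.finrank_eq_zero.mp (by rw [Z.2.2, hk0])
      exact Subtype.ext (hX.trans hZ.symm)
    have key := grass_aux_key X.1 Z.1 Y.1 X.2.2 Z.2.2 h'.2 hk1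
    have hbound : Module.finrank K ↥(X.1 ⊓ Y.1) ≤ k := by
      haveI : FiniteDimensional K ↥(X.1 ⊓ Y.1) := Submodule.finiteDimensional_of_le inf_le_left
      have h2 := Submodule.finrank_mono (R := K) (inf_le_left : X.1 ⊓ Y.1 ≤ X.1)
      rwa [X.2.2] at h2
    simp only [SimpleGraph.Walk.length_cons]
    omega

lemma grass_upper (n : ℕ) : ∀ X Y : Grass,
    k - Module.finrank K ↥(X.1 ⊓ Y.1) ≤ n →
    ∃ p : (grassmannGraph K V k).Walk X Y,
      p.length ≤ k - Module.finrank K ↥(X.1 ⊓ Y.1) := by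
  induction n with
  | zero =>
    intro X Y h
    haveI := X.2.1; haveI := Y.2.1
    haveI : FiniteDimensional K ↥(X.1 ⊓ Y.1) := Submodule.finiteDimensional_of_le inf_le_left
    have hle : Module.finrank K ↥(X.1 ⊓ Y.1) ≤ k := by
      have h2 := Submodule.finrank_mono (R := K) (inf_le_left : X.1 ⊓ Y.1 ≤ X.1)
      rwa [X.2.2] at h2
    have hm : Module.finrank K ↥(X.1 ⊓ Y.1) = k := by omega
    have hXY : X.1 = Y.1 := by
      have h1 : X.1 ⊓ Y.1 = X.1 :=
        Submodule.eq_of_le_of_finrank_eq inf_le_left (by rw [hm, X.2.2])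
      have h2 : X.1 ⊓ Y.1 = Y.1 :=
        Submodule.eq_of_le_of_finrank_eq inf_le_right (by rw [hm, Y.2.2])
      rw [← h1, h2]
    obtain rfl : X = Y := Subtype.ext hXY
    exact ⟨SimpleGraph.Walk.nil, by simp⟩
  | succ n ih =>
    intro X Y h
    haveI := X.2.1; haveI := Y.2.1
    haveI : FiniteDimensional K ↥(X.1 ⊓ Y.1) := Submodule.finiteDimensional_of_le inf_le_left
    set m := Module.finrank K ↥(X.1 ⊓ Y.1) with hmdef
    have hle : m ≤ k := by
      have h2 := Submodule.finrank_mono (R := K) (inf_le_left : X.1 ⊓ Y.1 ≤ X.1)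
      rwa [X.2.2] at h2
    rcases Nat.eq_or_lt_of_le hle with hmk | hmk
    · exact ih X Y (by omega)
    · -- m < k; build an adjacent vertex X' closer to Y
      -- choose y ∈ Y \ X
      have hYX : ¬ (Y.1 ≤ X.1) := by
        intro hle'
        have : Y.1 = X.1 := Submodule.eq_of_le_of_finrank_eq hle' (by rw [X.2.2, Y.2.2])
        have : X.1 ⊓ Y.1 = Y.1 := by rw [this, inf_idem]
        rw [hmdef] at hmk
        rw [this, Y.2.2] at hmk
        omega
      obtain ⟨y, hyY, hyX⟩ := SetLike.not_le_iff_exists.mp hYX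
      -- choose hyperplane W of X containing X ⊓ Y
      obtain ⟨W, hW1, hW2, hW3⟩ := grass_aux_between (k - m) (X.1 ⊓ Y.1) X.1 inf_le_left
        (by rw [X.2.2]) (by rw [X.2.2]; omega) (k - 1) (by omega) (by rw [X.2.2]; omega)
      haveI : FiniteDimensional K W := Submodule.finiteDimensional_of_le hW2
      have hyW : y ∉ W := fun hy => hyX (hW2 hy)
      set X' : Submodule K V := W ⊔ (K ∙ y) with hX'def
      haveI : FiniteDimensional K X' := Submodule.finiteDimensional_sup _ _
      have hX'fr : Module.finrank K X' = k := by
        rw [hX'def, grass_aux_sup_span W hyW, hW3]; omega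
      set XP : Grass := ⟨X', inferInstance, hX'fr⟩ with hXPdef
      -- adjacency X ~ XP
      have hyX' : y ∈ X' := (le_sup_right : (K ∙ y) ≤ X') (Submodule.mem_span_singleton_self y)
      have hne : X ≠ XP := by
        intro hEq
        exact hyX (by rw [hEq]; exact hyX')
      haveI : FiniteDimensional K ↥(X.1 ⊓ X') := Submodule.finiteDimensional_of_le inf_le_left
      have hadjfr : Module.finrank K ↥(X.1 ⊓ X') = k - 1 := by
        have hlelt : X.1 ⊓ X' < X' := lt_of_le_of_ne inf_le_right (by
          intro hEq
          exact hyX ((inf_le_left : X.1 ⊓ X' ≤ X.1) (hEq.symm ▸ hyX' : y ∈ X.1 ⊓ X')))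
        have h1 : Module.finrank K ↥(X.1 ⊓ X') < k := by
          have h2 := Submodule.finrank_lt_finrank_of_lt hlelt
          rwa [hX'fr] at h2
        have hWle : W ≤ X.1 ⊓ X' := le_inf hW2 le_sup_left
        have h2 : k - 1 ≤ Module.finrank K ↥(X.1 ⊓ X') := by
          have h3 := Submodule.finrank_mono (R := K) hWle
          rwa [hW3] at h3
        omega
      have hadj : (grassmannGraph K V k).Adj X XP := ⟨hne, hadjfr⟩
      -- X' ⊓ Y is bigger than X ⊓ Y
      haveI : FiniteDimensional K ↥(XP.1 ⊓ Y.1) :=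
        Submodule.finiteDimensional_of_le inf_le_left
      have hbig : m + 1 ≤ Module.finrank K ↥(XP.1 ⊓ Y.1) := by
        have hyXY : y ∉ (X.1 ⊓ Y.1) := fun hy => hyX ((inf_le_left : X.1 ⊓ Y.1 ≤ X.1) hy)
        have hsub : (X.1 ⊓ Y.1) ⊔ (K ∙ y) ≤ XP.1 ⊓ Y.1 := by
          refine sup_le (le_inf (le_trans hW1 le_sup_left) inf_le_right) ?_
          exact le_inf ((Submodule.span_singleton_le_iff_mem y X').mpr hyX')
            ((Submodule.span_singleton_le_iff_mem y Y.1).mpr hyY)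
        have := Submodule.finrank_mono (R := K) hsub
        rwa [grass_aux_sup_span (X.1 ⊓ Y.1) hyXY, ← hmdef] at this
      obtain ⟨p, hp⟩ := ih XP Y (by omega)
      refine ⟨SimpleGraph.Walk.cons hadj p, ?_⟩
      simp only [SimpleGraph.Walk.length_cons]
      omega

end Main

theorem stmt_16 {K V : Type*} [Field K] [AddCommGroup V] [Module K V] (k : ℕ)
    (hk : (k : Cardinal) < Module.rank K V)
    (X Y : {X : Submodule K V // FiniteDimensional K X ∧ Module.finrank K X = k}) :
    (grassmannGraph K V k).dist X Y = k - Module.finrank K ↥(X.1 ⊓ Y.1) := by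
  obtain ⟨p, hp⟩ := grass_upper (k - Module.finrank K ↥(X.1 ⊓ Y.1)) X Y le_rfl
  have hub : (grassmannGraph K V k).dist X Y ≤ k - Module.finrank K ↥(X.1 ⊓ Y.1) :=
    le_trans (SimpleGraph.dist_le p) hp
  have hr : (grassmannGraph K V k).Reachable X Y := ⟨p⟩
  obtain ⟨q, hq⟩ := hr.exists_walk_length_eq_dist
  have hlb := grass_lower X Y q
  omega
end

section
/- Let V be a vector space over a field and k ≥ 2 with (if dim V is finite) k ≤ dim V − 2. Every clique of the Grassmann graph Γ_k(V) containing at least three elements is contained in a star [S⟩_k (all k-dimensional subspaces containing a fixed (k−1)-dimensional subspace S) or a top ⟨U]_k (all k-dimensional subspaces contained in a fixed (k+1)-dimensional subspace U). -/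
open Module Submodule

private lemma join_eq_of_distinct {K V : Type*} [Field K] [AddCommGroup V] [Module K V]
    {A B Z : Submodule K V} (n : ℕ) [FiniteDimensional K Z]
    (hA : A ≤ Z) (hB : B ≤ Z) (hAB : A ≠ B)
    (hrA : finrank K A = n) (hrB : finrank K B = n) (hrZ : finrank K Z = n + 1) :
    A ⊔ B = Z := by
  haveI : FiniteDimensional K A := Submodule.finiteDimensional_of_le hA
  haveI : FiniteDimensional K B := Submodule.finiteDimensional_of_le hB
  have hlt : A ⊓ B < A := by
    refine lt_of_le_of_ne inf_le_left ?_
    intro h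
    have hle : A ≤ B := by rw [← h]; exact inf_le_right
    exact hAB (Submodule.eq_of_le_of_finrank_le hle (by rw [hrA, hrB]))
  have h1 : finrank K ↥(A ⊓ B) < n := by
    have := Submodule.finrank_lt_finrank_of_lt hlt
    omega
  have h2 := Submodule.finrank_sup_add_finrank_inf_eq A B
  have h3 : n + 1 ≤ finrank K ↥(A ⊔ B) := by omega
  exact Submodule.eq_of_le_of_finrank_le (sup_le hA hB) (by omega)

theorem stmt_18 {K V : Type*} [Field K] [AddCommGroup V] [Module K V]
    (k : ℕ) (hk : 2 ≤ k)
    (hfin : ∀ _ : FiniteDimensional K V, k + 2 ≤ Module.finrank K V)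
    (C : Set (Submodule K V))
    (hdim : ∀ X ∈ C, FiniteDimensional K X ∧ Module.finrank K X = k)
    (hclique : ∀ X ∈ C, ∀ Y ∈ C, X ≠ Y → Module.finrank K ↥(X ⊓ Y) = k - 1)
    (hcard : 3 ≤ C.encard) :
    (∃ S : Submodule K V, FiniteDimensional K S ∧ Module.finrank K S = k - 1 ∧
      ∀ X ∈ C, S ≤ X) ∨
    (∃ U : Submodule K V, FiniteDimensional K U ∧ Module.finrank K U = k + 1 ∧
      ∀ X ∈ C, X ≤ U) := by
  -- get two distinct elements
  obtain ⟨X, Y, hX, hY, hXY⟩ := Set.one_lt_encard_iff.mp (by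
    calc (1 : ℕ∞) < 3 := by norm_num
    _ ≤ C.encard := hcard)
  haveI finX : FiniteDimensional K X := (hdim X hX).1
  haveI finY : FiniteDimensional K Y := (hdim Y hY).1
  have rX := (hdim X hX).2
  have rY := (hdim Y hY).2
  -- key lemma
  have key : ∀ P ∈ C, ∀ Q ∈ C, ∀ Z ∈ C, P ≠ Q → Z ≠ P → Z ≠ Q →
      (P ⊓ Q ≤ Z) ∨ Z ≤ P ⊔ Q := by
    intro P hP Q hQ Z hZ hPQ hZP hZQ
    haveI : FiniteDimensional K P := (hdim P hP).1
    haveI : FiniteDimensional K Q := (hdim Q hQ).1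
    haveI : FiniteDimensional K Z := (hdim Z hZ).1
    have rA : finrank K ↥(Z ⊓ P) = k - 1 := hclique Z hZ P hP hZP
    have rB : finrank K ↥(Z ⊓ Q) = k - 1 := hclique Z hZ Q hQ hZQ
    by_cases hAB : Z ⊓ P = Z ⊓ Q
    · left
      have hle : Z ⊓ P ≤ P ⊓ Q := le_inf inf_le_right (hAB ▸ inf_le_right : Z ⊓ P ≤ Q)
      have rPQ : finrank K ↥(P ⊓ Q) = k - 1 := hclique P hP Q hQ hPQ
      haveI : FiniteDimensional K ↥(P ⊓ Q) := Submodule.finiteDimensional_of_le (inf_le_left : P ⊓ Q ≤ P)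
      have := Submodule.eq_of_le_of_finrank_le hle (by rw [rA, rPQ])
      rw [← this]
      exact inf_le_left
    · right
      have hZeq : (Z ⊓ P) ⊔ (Z ⊓ Q) = Z :=
        join_eq_of_distinct (k - 1) inf_le_left inf_le_left hAB rA rB
          (by rw [(hdim Z hZ).2]; omega)
      rw [← hZeq]
      exact sup_le (inf_le_right.trans le_sup_left) (inf_le_right.trans le_sup_right)
  haveI finXY : FiniteDimensional K ↥(X ⊓ Y) :=
    Submodule.finiteDimensional_of_le (inf_le_left : X ⊓ Y ≤ X)
  have rXY : finrank K ↥(X ⊓ Y) = k - 1 := hclique X hX Y hY hXY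
  by_cases hstar : ∀ Z ∈ C, X ⊓ Y ≤ Z
  · exact Or.inl ⟨X ⊓ Y, finXY, rXY, hstar⟩
  push_neg at hstar
  obtain ⟨Z, hZ, hZS⟩ := hstar
  haveI finZ : FiniteDimensional K Z := (hdim Z hZ).1
  have rZ := (hdim Z hZ).2
  have hZX : Z ≠ X := fun h => hZS (h ▸ inf_le_left)
  have hZY : Z ≠ Y := fun h => hZS (h ▸ inf_le_right)
  have hZU : Z ≤ X ⊔ Y := (key X hX Y hY Z hZ hXY hZX hZY).resolve_left (fun h => hZS h)
  haveI finU : FiniteDimensional K ↥(X ⊔ Y) := inferInstance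
  have rU : finrank K ↥(X ⊔ Y) = k + 1 := by
    have := Submodule.finrank_sup_add_finrank_inf_eq X Y
    omega
  refine Or.inr ⟨X ⊔ Y, finU, rU, ?_⟩
  -- X ⊔ Z = X ⊔ Y and Y ⊔ Z = X ⊔ Y
  have hXZU : X ⊔ Z = X ⊔ Y := by
    refine Submodule.eq_of_le_of_finrank_le (sup_le le_sup_left hZU) ?_
    have rXZ : finrank K ↥(X ⊓ Z) = k - 1 := hclique X hX Z hZ (Ne.symm hZX)
    have := Submodule.finrank_sup_add_finrank_inf_eq X Z
    omega
  have hYZU : Y ⊔ Z = X ⊔ Y := by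
    refine Submodule.eq_of_le_of_finrank_le (sup_le le_sup_right hZU) ?_
    have rYZ : finrank K ↥(Y ⊓ Z) = k - 1 := hclique Y hY Z hZ (Ne.symm hZY)
    have := Submodule.finrank_sup_add_finrank_inf_eq Y Z
    omega
  intro W hW
  by_cases hWX : W = X
  · exact hWX ▸ le_sup_left
  by_cases hWY : W = Y
  · exact hWY ▸ le_sup_right
  by_cases hWZ : W = Z
  · exact hWZ ▸ hZU
  -- apply key to pairs (X,Z) and (Y,Z)
  rcases key X hX Z hZ W hW (Ne.symm hZX) hWX hWZ with h1 | h1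
  · rcases key Y hY Z hZ W hW (Ne.symm hZY) hWY hWZ with h2 | h2
    · -- W contains both X⊓Z and Y⊓Z; show they are distinct, join = Z, so Z ≤ W, W = Z, contradiction
      exfalso
      have hne : X ⊓ Z ≠ Y ⊓ Z := by
        intro h
        apply hZS
        have hle : X ⊓ Z ≤ X ⊓ Y := le_inf inf_le_left (h ▸ inf_le_left : X ⊓ Z ≤ Y)
        have := Submodule.eq_of_le_of_finrank_le hle
          (by rw [hclique X hX Z hZ (Ne.symm hZX), rXY])
        rw [← this]
        exact inf_le_right
      have hjoin : (X ⊓ Z) ⊔ (Y ⊓ Z) = Z :=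
        join_eq_of_distinct (k - 1) inf_le_right inf_le_right hne
          (hclique X hX Z hZ (Ne.symm hZX)) (hclique Y hY Z hZ (Ne.symm hZY))
          (by omega)
      have hZW : Z ≤ W := hjoin ▸ sup_le h1 h2
      haveI : FiniteDimensional K W := (hdim W hW).1
      have : Z = W := Submodule.eq_of_le_of_finrank_le hZW (by rw [rZ, (hdim W hW).2])
      exact hWZ this.symm
    · exact h2.trans hYZU.le
  · exact h1.trans hXZU.le
end
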